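/- Let $\mu$ be a probability measure on $\mathbb{R}^n$ and $c, b > 0$. Suppose that for every locally Lipschitz $\phi: \mathbb{R}^n \to [0,1]$ with $\mu\{\phi = 0\} \ge 1/2$ and $\mu\{\phi = 1\} \ge a$ one has $\int \|\nabla\phi\|_2\, d\mu \ge c\, n^{1/p} a \log^{1-1/p}(1/a)$ for all $0 < a < 1/2$. Then there is a constant $c_1 > 0$ depending only on $c$ such that for every locally Lipschitz $\phi: \mathbb{R}^n \to [0,1]$ with $\mu\{\phi = 0\} \ge 1/2$ and $\mu\{\phi = 1\} \ge a$, $\int \|\nabla\phi\|_2^2\, d\mu \ge c_1 n^{2/p} a \log^{2-2/p}(1/a)$. -/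

import Mathlib

open MeasureTheory

open Set Filter

section PointwiseHelpers

variable {E : Type*} [NormedAddCommGroup E] [NormedSpace ℝ E]

/-- at a global max point the (junk-valued) fderiv vanishes -/
lemma fderiv_eq_zero_of_forall_le {f : E → ℝ} {x : E} (h : ∀ y, f y ≤ f x) :
    fderiv ℝ f x = 0 :=
  IsLocalMax.fderiv_eq_zero (Filter.Eventually.of_forall h)

lemma fderiv_eq_zero_of_forall_ge {f : E → ℝ} {x : E} (h : ∀ y, f x ≤ f y) :
    fderiv ℝ f x = 0 :=
  IsLocalMin.fderiv_eq_zero (Filter.Eventually.of_forall h)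

/-- if `g = a*f + b` near `x` then `‖fderiv g x‖ ≤ |a| * ‖fderiv f x‖`, junk values included. -/
lemma norm_fderiv_affine_le {f g : E → ℝ} {x : E} {a b : ℝ}
    (h : ∀ᶠ y in nhds x, g y = a * f y + b) :
    ‖fderiv ℝ g x‖ ≤ |a| * ‖fderiv ℝ f x‖ := by
  have hg : fderiv ℝ g x = fderiv ℝ (fun y => a * f y + b) x :=
    Filter.EventuallyEq.fderiv_eq h
  by_cases hd : DifferentiableAt ℝ f x
  · rw [hg]
    have h1 : fderiv ℝ (fun y => a * f y + b) x = a • fderiv ℝ f x := by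
      rw [fderiv_add_const]
      exact fderiv_const_mul hd a
    rw [h1, norm_smul, Real.norm_eq_abs]
  · by_cases ha : a = 0
    · subst ha
      rw [hg]
      simp only [zero_mul, zero_add]
      rw [fderiv_fun_const]
      simp
    · have hnd : ¬ DifferentiableAt ℝ (fun y => a * f y + b) x := by
        intro hdd
        apply hd
        have h2 : DifferentiableAt ℝ (fun y => a⁻¹ * ((a * f y + b) - b)) x :=
          ((hdd.sub_const b).const_mul a⁻¹)
        have h3 : (fun y => a⁻¹ * ((a * f y + b) - b)) = f := by
          funext y; field_simp; ring
        rwa [h3] at h2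
      rw [hg, fderiv_zero_of_not_differentiableAt hnd]
      simp
      positivity


/-- gradient bound for the upper truncation `ψ = max (2φ-1) 0`. -/
lemma psi_grad_bound {φ : E → ℝ} (hφ : Continuous φ) (hmem : ∀ x, φ x ∈ Set.Icc (0:ℝ) 1)
    (x : E) :
    ‖fderiv ℝ (fun y => max (2 * φ y - 1) 0) x‖ ≤
      Set.indicator {y | 1/2 < φ y ∧ φ y < 1} (fun y => 2 * ‖fderiv ℝ φ y‖) x := by
  set ψ : E → ℝ := fun y => max (2 * φ y - 1) 0 with hψ
  rcases lt_trichotomy (φ x) (1/2) with h1 | h2 | h3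
  · -- locally zero
    have hev : ∀ᶠ y in nhds x, ψ y = (0:ℝ) := by
      have : ∀ᶠ y in nhds x, φ y < 1/2 := hφ.continuousAt.eventually_lt continuousAt_const h1
      exact this.mono fun y hy => max_eq_right (by linarith)
    have h0 : fderiv ℝ ψ x = 0 := by
      have heq : fderiv ℝ ψ x = fderiv ℝ (fun _ => (0:ℝ)) x :=
        Filter.EventuallyEq.fderiv_eq hev
      rw [heq]; simp
    have hx : x ∉ {y | 1/2 < φ y ∧ φ y < 1} := by
      intro hx; exact absurd hx.1 (not_lt.2 h1.le)
    rw [h0, Set.indicator_of_notMem hx]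
    simp
  · -- global min
    have h0 : fderiv ℝ ψ x = 0 := by
      apply fderiv_eq_zero_of_forall_ge
      intro y
      have : ψ x = 0 := by rw [hψ]; simp [h2]
      rw [this]; exact le_max_right _ _
    have hx : x ∉ {y | 1/2 < φ y ∧ φ y < 1} := by
      intro hx; exact absurd hx.1 (by rw [h2]; exact lt_irrefl _)
    rw [h0, Set.indicator_of_notMem hx]
    simp
  · rcases lt_or_eq_of_le (hmem x).2 with h4 | h4
    · -- active zone
      have hx : x ∈ {y | 1/2 < φ y ∧ φ y < 1} := ⟨h3, h4⟩
      rw [Set.indicator_of_mem hx]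
      have hev : ∀ᶠ y in nhds x, ψ y = 2 * φ y + (-1) := by
        have : ∀ᶠ y in nhds x, (1:ℝ)/2 < φ y := continuousAt_const.eventually_lt hφ.continuousAt h3
        exact this.mono fun y hy => by
          rw [hψ]; simp only; rw [max_eq_left (by linarith)]; ring
      have := norm_fderiv_affine_le hev
      simpa using this
    · -- global max
      have h0 : fderiv ℝ ψ x = 0 := by
        apply fderiv_eq_zero_of_forall_le
        intro y
        have hle : ψ y ≤ 1 := max_le (by linarith [(hmem y).2]) zero_le_one
        have : ψ x = 1 := by rw [hψ]; simp only; rw [← h4]; rw [max_eq_left (by linarith)]; linarith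
        rw [this]; exact hle
      have hx : x ∉ {y | 1/2 < φ y ∧ φ y < 1} := by
        intro hx; exact absurd hx.2 (by rw [← h4]; exact lt_irrefl _)
      rw [h0, Set.indicator_of_notMem hx]
      simp

/-- gradient bound for the lower truncation `χ = min (2φ) 1`. -/
lemma chi_grad_bound {φ : E → ℝ} (hφ : Continuous φ) (hmem : ∀ x, φ x ∈ Set.Icc (0:ℝ) 1)
    (x : E) :
    ‖fderiv ℝ (fun y => min (2 * φ y) 1) x‖ ≤ 2 * ‖fderiv ℝ φ x‖ := by
  set χ : E → ℝ := fun y => min (2 * φ y) 1 with hχ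
  rcases lt_or_ge (φ x) (1/2) with h1 | h2
  · have hev : ∀ᶠ y in nhds x, χ y = 2 * φ y + 0 := by
      have : ∀ᶠ y in nhds x, φ y < 1/2 := hφ.continuousAt.eventually_lt continuousAt_const h1
      exact this.mono fun y hy => by
        rw [hχ]; simp only; rw [min_eq_left (by linarith)]; ring
    have := norm_fderiv_affine_le hev
    simpa using this
  · have h0 : fderiv ℝ χ x = 0 := by
      apply fderiv_eq_zero_of_forall_le
      intro y
      have : χ x = 1 := by rw [hχ]; simp only; rw [min_eq_right (by linarith)]
      rw [this]; exact min_le_right _ _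
    rw [h0]
    simp only [norm_zero]
    positivity

/-- outside `{0 < φ < 1}` the gradient of `φ` vanishes. -/
lemma phi_indicator_eq {φ : E → ℝ} (hmem : ∀ x, φ x ∈ Set.Icc (0:ℝ) 1) (x : E) :
    ENNReal.ofReal ‖fderiv ℝ φ x‖ =
      Set.indicator {y | 0 < φ y ∧ φ y < 1} (fun y => ENNReal.ofReal ‖fderiv ℝ φ y‖) x := by
  by_cases hx : x ∈ {y | 0 < φ y ∧ φ y < 1}
  · rw [Set.indicator_of_mem hx]
  · rw [Set.indicator_of_notMem hx]
    have : fderiv ℝ φ x = 0 := by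
      simp only [Set.mem_setOf_eq, not_and_or, not_lt] at hx
      rcases hx with hx | hx
      · have h0 : φ x = 0 := le_antisymm hx (hmem x).1
        apply fderiv_eq_zero_of_forall_ge
        intro y; rw [h0]; exact (hmem y).1
      · have h0 : φ x = 1 := le_antisymm (hmem x).2 hx
        apply fderiv_eq_zero_of_forall_le
        intro y; rw [h0]; exact (hmem y).2
    rw [this]
    simp


end PointwiseHelpers

section IntegralHelpers

variable {E : Type*} [MeasurableSpace E]

lemma cs_lemma (μ : Measure E) {g : E → ENNReal} (hg : Measurable g)
    (T : Set E) :
    (∫⁻ x in T, g x ∂μ) ^ 2 ≤ (∫⁻ x in T, g x ^ 2 ∂μ) * μ T := by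
  have hpq : Real.HolderConjugate 2 2 := Real.HolderConjugate.two_two
  have H := ENNReal.lintegral_mul_le_Lp_mul_Lq (μ.restrict T) hpq
    hg.aemeasurable aemeasurable_const (g := fun _ => (1:ENNReal))
  simp only [mul_one, Pi.mul_apply, ENNReal.one_rpow, lintegral_const,
    Measure.restrict_apply MeasurableSet.univ, Set.univ_inter, one_mul] at H
  -- H : ∫⁻ g ≤ (∫⁻ g ^ (2:ℝ)) ^ (1/2) * (μ T) ^ (1/2)
  have h2 : (∫⁻ x in T, g x ∂μ) ^ 2 ≤
      ((∫⁻ x in T, g x ^ (2:ℝ) ∂μ) ^ (1/2 : ℝ) * (μ T) ^ (1/2 : ℝ)) ^ 2 := by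
    exact pow_le_pow_left' H 2
  calc (∫⁻ x in T, g x ∂μ) ^ 2
      ≤ ((∫⁻ x in T, g x ^ (2:ℝ) ∂μ) ^ (1/2 : ℝ) * (μ T) ^ (1/2 : ℝ)) ^ 2 := h2
    _ = (∫⁻ x in T, g x ^ (2:ℝ) ∂μ) * μ T := by
        rw [mul_pow, ← ENNReal.rpow_natCast (_ ^ (1/2:ℝ)) 2,
          ← ENNReal.rpow_natCast ((μ T) ^ (1/2:ℝ)) 2, ← ENNReal.rpow_mul, ← ENNReal.rpow_mul]
        norm_num
    _ = (∫⁻ x in T, g x ^ 2 ∂μ) * μ T := by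
        congr 1
        apply lintegral_congr
        intro x
        rw [← ENNReal.rpow_natCast (g x) 2]
        norm_num


/-- Combined Cauchy-Schwarz step. -/
lemma quant_step (μ : Measure E) (u v : E → ℝ) (hu : ∀ x, 0 ≤ u x)
    (W : Set E) (hWm : MeasurableSet W)
    (hmeasu : Measurable u)
    (r t : ℝ) (hr : 0 ≤ r) (ht : 0 < t) (hμW : μ W ≤ ENNReal.ofReal t)
    (hH : ENNReal.ofReal r ≤ ∫⁻ x, ENNReal.ofReal (v x) ∂μ)
    (hgrad : ∀ x, v x ≤ W.indicator (fun y => 2 * u y) x) :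
    ENNReal.ofReal (r^2/(4*t)) ≤ ∫⁻ x, ENNReal.ofReal (u x ^ 2) ∂μ := by
  set g : E → ENNReal := fun x => ENNReal.ofReal (u x) with hg
  have hgmeas : Measurable g := hmeasu.ennreal_ofReal
  set I := ∫⁻ x, ENNReal.ofReal (u x ^ 2) ∂μ with hI
  -- step 1 : ofReal r ≤ 2 * ∫_W g
  have step1 : ENNReal.ofReal r ≤ 2 * ∫⁻ x in W, g x ∂μ := by
    calc ENNReal.ofReal r ≤ ∫⁻ x, ENNReal.ofReal (v x) ∂μ := hH
      _ ≤ ∫⁻ x, W.indicator (fun y => (2:ENNReal) * g y) x ∂μ := by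
          apply lintegral_mono
          intro x
          calc ENNReal.ofReal (v x) ≤ ENNReal.ofReal (W.indicator (fun y => 2 * u y) x) :=
                ENNReal.ofReal_le_ofReal (hgrad x)
            _ = W.indicator (fun y => (2:ENNReal) * g y) x := by
                by_cases hx : x ∈ W
                · rw [Set.indicator_of_mem hx, Set.indicator_of_mem hx,
                    ENNReal.ofReal_mul (by norm_num)]
                  norm_num
                  rfl
                · rw [Set.indicator_of_notMem hx, Set.indicator_of_notMem hx]
                  simp
      _ = ∫⁻ x in W, (2:ENNReal) * g x ∂μ := lintegral_indicator hWm _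
      _ = 2 * ∫⁻ x in W, g x ∂μ := lintegral_const_mul 2 hgmeas
  -- step 2 : integral of g^2 equals I
  have hg2 : ∀ x, g x ^ 2 = ENNReal.ofReal (u x ^ 2) :=
    fun x => (ENNReal.ofReal_pow (hu x) 2).symm
  have step2 : (∫⁻ x in W, g x ∂μ) ^ 2 ≤ I * μ W := by
    calc (∫⁻ x in W, g x ∂μ) ^ 2 ≤ (∫⁻ x in W, g x ^ 2 ∂μ) * μ W := cs_lemma μ hgmeas W
      _ ≤ (∫⁻ x, g x ^ 2 ∂μ) * μ W := by
          exact mul_le_mul_left (setLIntegral_le_lintegral _ _) _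
      _ = I * μ W := by
          congr 1
          exact lintegral_congr fun x => hg2 x
  -- chain
  have chain : ENNReal.ofReal (r^2) ≤ I * ENNReal.ofReal (4*t) := by
    calc ENNReal.ofReal (r^2) = (ENNReal.ofReal r) ^ 2 := ENNReal.ofReal_pow hr 2
      _ ≤ (2 * ∫⁻ x in W, g x ∂μ) ^ 2 := pow_le_pow_left' step1 2
      _ = 4 * (∫⁻ x in W, g x ∂μ) ^ 2 := by rw [mul_pow]; norm_num
      _ ≤ 4 * (I * μ W) := by exact mul_le_mul_right step2 4
      _ ≤ 4 * (I * ENNReal.ofReal t) := by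
          exact mul_le_mul_right (mul_le_mul_right hμW I) 4
      _ = I * ENNReal.ofReal (4*t) := by
          rw [ENNReal.ofReal_mul (by norm_num : (0:ℝ) ≤ 4)]
          have : ENNReal.ofReal (4:ℝ) = 4 := by norm_num
          rw [this]; ring
  have hk0 : ENNReal.ofReal (4*t) ≠ 0 := by
    simp only [ne_eq, ENNReal.ofReal_eq_zero, not_le]; linarith
  have hktop : ENNReal.ofReal (4*t) ≠ ⊤ := ENNReal.ofReal_ne_top
  rw [← ENNReal.mul_le_mul_iff_left hk0 hktop]
  calc ENNReal.ofReal (r^2/(4*t)) * ENNReal.ofReal (4*t)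
      = ENNReal.ofReal (r^2/(4*t) * (4*t)) := (ENNReal.ofReal_mul (by positivity)).symm
    _ = ENNReal.ofReal (r^2) := by
        congr 1
        field_simp
    _ ≤ I * ENNReal.ofReal (4*t) := chain


end IntegralHelpers


lemma psi2_ineq (p a a'' : ℝ) (hp1 : 1 ≤ p) (hp2 : p ≤ 2) (ha : 0 < a)
    (hasmall : a ≤ (1/16:ℝ)^4) (h16 : 16*a ≤ a'') (hq : a'' ≤ 1/4) :
    4 * (a * Real.log (1/a) ^ (2-2/p)) ≤ a'' * Real.log (1/a'') ^ (2-2/p) := by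
  have hp0 : 0 < p := by linarith
  set q2 : ℝ := 2 - 2/p with hq2def
  have hq20 : 0 ≤ q2 := by
    have : 2/p ≤ 2 := by
      rw [div_le_iff₀ hp0]; nlinarith
    simp only [hq2def]; linarith
  have hq21 : q2 ≤ 1 := by
    have : 1 ≤ 2/p := by
      rw [le_div_iff₀ hp0]; linarith
    simp only [hq2def]; linarith
  have ha'' : 0 < a'' := by linarith
  have h1a : (0:ℝ) < 1/a := by positivity
  set L : ℝ := Real.log (1/a) with hLdef
  set l : ℝ := Real.log (1/a'') with hldef
  have hL1 : 1 ≤ L := by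
    rw [hLdef, Real.le_log_iff_exp_le h1a]
    have h9 := Real.exp_one_lt_d9
    have : (1:ℝ)/a ≥ 65536 := by
      rw [ge_iff_le, le_div_iff₀ ha]
      nlinarith
    linarith
  have hl1 : 1 ≤ l := by
    rw [hldef, Real.le_log_iff_exp_le (by positivity)]
    have h9 := Real.exp_one_lt_d9
    have : (4:ℝ) ≤ 1/a'' := by
      rw [le_div_iff₀ ha'']; linarith
    linarith
  have hL0 : 0 < L := by linarith
  have hl0 : 0 < l := by linarith
  have hlq1 : (1:ℝ) ≤ l ^ q2 := Real.one_le_rpow hl1 hq20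
  by_cases hcase : L/2 ≤ l
  · -- moderate case : L ≤ 2 l
    have hL2l : L ≤ 2 * l := by linarith
    have h1 : L ^ q2 ≤ (2*l) ^ q2 := Real.rpow_le_rpow (le_of_lt hL0) hL2l hq20
    have h2 : (2*l) ^ q2 = 2 ^ q2 * l ^ q2 := Real.mul_rpow (by norm_num) (le_of_lt hl0)
    have h3 : (2:ℝ) ^ q2 ≤ 2 := by
      calc (2:ℝ) ^ q2 ≤ 2 ^ (1:ℝ) := Real.rpow_le_rpow_of_exponent_le one_le_two hq21
        _ = 2 := Real.rpow_one 2
    have h4 : L ^ q2 ≤ 2 * l ^ q2 := by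
      calc L ^ q2 ≤ 2 ^ q2 * l ^ q2 := by rw [← h2]; exact h1
        _ ≤ 2 * l ^ q2 := by
            have := Real.rpow_nonneg (le_of_lt hl0) q2
            nlinarith
    have hlq0 : 0 ≤ l ^ q2 := Real.rpow_nonneg (le_of_lt hl0) q2
    nlinarith
  · -- jump case : l < L/2, so a'' ≥ √a
    push_neg at hcase
    have hsqrt : a ^ ((1:ℝ)/2) ≤ a'' := by
      have hloga : Real.log a = -L := by
        rw [hLdef, one_div, Real.log_inv, neg_neg]
      have h1 : a ^ ((1:ℝ)/2) = Real.exp (-(L/2)) := by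
        rw [Real.rpow_def_of_pos ha, hloga]; ring_nf
      have h2 : a'' = Real.exp (-l) := by
        rw [hldef, one_div, Real.log_inv, neg_neg, Real.exp_log ha'']
      rw [h1, h2]
      apply Real.exp_le_exp.2
      linarith
    -- L ≤ 4 * (1/a)^{1/4}
    have hL4 : L ≤ 4 * (1/a) ^ ((1:ℝ)/4) := by
      have h1 : Real.log ((1/a) ^ ((1:ℝ)/4)) = (1/4) * L := by
        rw [Real.log_rpow h1a, hLdef]
      have h2 : Real.log ((1/a) ^ ((1:ℝ)/4)) ≤ (1/a) ^ ((1:ℝ)/4) := by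
        have hpos : (0:ℝ) < (1/a) ^ ((1:ℝ)/4) := Real.rpow_pos_of_pos h1a _
        linarith [Real.log_le_sub_one_of_pos hpos]
      linarith
    -- a * (1/a)^{1/4} = a^{1/4} * a^{1/2}
    have hsplit : a * (1/a) ^ ((1:ℝ)/4) = a ^ ((1:ℝ)/4) * a ^ ((1:ℝ)/2) := by
      have e1 : (1/a) ^ ((1:ℝ)/4) = a ^ (-((1:ℝ)/4)) := by
        rw [one_div, Real.inv_rpow (le_of_lt ha), Real.rpow_neg (le_of_lt ha)]
      calc a * (1/a) ^ ((1:ℝ)/4) = a ^ (1:ℝ) * a ^ (-((1:ℝ)/4)) := by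
            rw [e1, Real.rpow_one]
        _ = a ^ ((1:ℝ) + -((1:ℝ)/4)) := (Real.rpow_add ha _ _).symm
        _ = a ^ ((1:ℝ)/4 + (1:ℝ)/2) := by norm_num
        _ = a ^ ((1:ℝ)/4) * a ^ ((1:ℝ)/2) := Real.rpow_add ha _ _
    have hquarter : a ^ ((1:ℝ)/4) ≤ 1/16 := by
      calc a ^ ((1:ℝ)/4) ≤ ((1/16:ℝ)^4) ^ ((1:ℝ)/4) :=
            Real.rpow_le_rpow (le_of_lt ha) hasmall (by norm_num)
        _ = 1/16 := by
            rw [← Real.rpow_natCast (1/16:ℝ) 4, ← Real.rpow_mul (by norm_num)]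
            norm_num
    -- main chain : 4 a L^{q2} ≤ 4 a L ≤ a^{1/2} ≤ a'' ≤ a'' l^{q2}
    have hLq : L ^ q2 ≤ L := by
      calc L ^ q2 ≤ L ^ (1:ℝ) := Real.rpow_le_rpow_of_exponent_le hL1 hq21
        _ = L := Real.rpow_one L
    have hhalf : 0 ≤ a ^ ((1:ℝ)/2) := Real.rpow_nonneg (le_of_lt ha) _
    have hkey : 4 * (a * L) ≤ a ^ ((1:ℝ)/2) := by
      have c1 : 4 * (a * L) ≤ 4 * (a * (4 * (1/a) ^ ((1:ℝ)/4))) := by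
        gcongr
      have c2 : 4 * (a * (4 * (1/a) ^ ((1:ℝ)/4))) = 16 * (a ^ ((1:ℝ)/4) * a ^ ((1:ℝ)/2)) := by
        rw [← hsplit]; ring
      have c3 : 16 * (a ^ ((1:ℝ)/4) * a ^ ((1:ℝ)/2)) ≤ 16 * ((1/16) * a ^ ((1:ℝ)/2)) := by
        gcongr
      calc 4 * (a * L) ≤ 16 * (a ^ ((1:ℝ)/4) * a ^ ((1:ℝ)/2)) := by linarith
        _ ≤ 16 * ((1/16) * a ^ ((1:ℝ)/2)) := c3
        _ = a ^ ((1:ℝ)/2) := by ring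
    calc 4 * (a * L ^ q2) ≤ 4 * (a * L) := by
          have h0 : (0:ℝ) ≤ 4 * a := by positivity
          calc 4 * (a * L ^ q2) = (4*a) * L ^ q2 := by ring
            _ ≤ (4*a) * L := mul_le_mul_of_nonneg_left hLq h0
            _ = 4 * (a * L) := by ring
      _ ≤ a ^ ((1:ℝ)/2) := hkey
      _ ≤ a'' := hsqrt
      _ = a'' * 1 := (mul_one _).symm
      _ ≤ a'' * l ^ q2 := mul_le_mul_of_nonneg_left hlq1 (le_of_lt ha'')

section Main

local notation "En" n => EuclideanSpace ℝ (Fin n)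

lemma main_ind (c : ℝ) (hc : 0 < c) (n : ℕ) (hn : 1 ≤ n) (p : ℝ) (hp1 : 1 ≤ p) (hp2 : p ≤ 2)
    (μ : Measure (EuclideanSpace ℝ (Fin n))) (hprob : IsProbabilityMeasure μ)
    (H : ∀ a : ℝ, 0 < a → a < 1 / 2 →
        ∀ φ : EuclideanSpace ℝ (Fin n) → ℝ, LocallyLipschitz φ →
          (∀ x, φ x ∈ Set.Icc (0 : ℝ) 1) →
          μ {x | φ x = 0} ≥ 1 / 2 → μ {x | φ x = 1} ≥ ENNReal.ofReal a →
          ∫⁻ x, ENNReal.ofReal ‖fderiv ℝ φ x‖ ∂μ ≥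
            ENNReal.ofReal (c * (n : ℝ) ^ ((1 : ℝ) / p) * a *
              (Real.log (1 / a)) ^ (1 - 1 / p)))
    (N : ℕ) :
    ∀ a : ℝ, (1/16:ℝ)^(N+4) ≤ a → a < 1 / 2 →
        ∀ φ : EuclideanSpace ℝ (Fin n) → ℝ, LocallyLipschitz φ →
          (∀ x, φ x ∈ Set.Icc (0 : ℝ) 1) →
          μ {x | φ x = 0} ≥ 1 / 2 → μ {x | φ x = 1} ≥ ENNReal.ofReal a →
          ∫⁻ x, ENNReal.ofReal (‖fderiv ℝ φ x‖ ^ 2) ∂μ ≥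
            ENNReal.ofReal (c^2/131072 * (n : ℝ) ^ ((2 : ℝ) / p) * a *
              (Real.log (1 / a)) ^ (2 - 2 / p)) := by
  -- preliminary positivity facts, independent of N
  have hn0 : (0:ℝ) < (n:ℝ) := by exact_mod_cast Nat.lt_of_lt_of_le Nat.zero_lt_one hn
  have hp0 : (0:ℝ) < p := by linarith
  induction N with
  | zero =>
    intro a haN ha2 φ hφ hmem h0 h1
    rw [ge_iff_le]
    have ha : 0 < a := lt_of_lt_of_le (by positivity) haN
    have hL0 : 0 < Real.log (1/a) := Real.log_pos (by rw [lt_div_iff₀ ha]; linarith)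
    set L := Real.log (1/a) with hLdef
    set n1 := (n:ℝ) ^ ((1:ℝ)/p) with hn1def
    set n2 := (n:ℝ) ^ ((2:ℝ)/p) with hn2def
    set Lq := L ^ (1 - 1/p) with hLqdef
    set L2 := L ^ (2 - 2/p) with hL2def
    have e1 : n1 * n1 = n2 := by
      rw [hn1def, hn2def, ← Real.rpow_add hn0]; congr 1; ring
    have e2 : Lq * Lq = L2 := by
      rw [hLqdef, hL2def, ← Real.rpow_add hL0]; congr 1; ring
    set r := c * n1 * a * Lq with hrdef
    have hr0 : 0 ≤ r := by
      have : 0 ≤ n1 := Real.rpow_nonneg (le_of_lt hn0) _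
      have : 0 ≤ Lq := Real.rpow_nonneg (le_of_lt hL0) _
      positivity
    have hφc : Continuous φ := hφ.continuous
    -- the open set where φ is strictly between 0 and 1
    set S : Set (EuclideanSpace ℝ (Fin n)) := {x | 0 < φ x ∧ φ x < 1} with hSdef
    have hSopen : IsOpen S := by
      have : S = {x | 0 < φ x} ∩ {x | φ x < 1} := rfl
      rw [this]
      exact (isOpen_lt continuous_const hφc).inter (isOpen_lt hφc continuous_const)
    have hSmeas : MeasurableSet S := hSopen.measurableSet
    -- μ S ≤ 1/2
    have hzmeas : MeasurableSet {x | φ x = 0} :=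
      (isClosed_eq hφc continuous_const).measurableSet
    have hμS : μ S ≤ ENNReal.ofReal (1/2) := by
      have hsub : S ⊆ {x | φ x = 0}ᶜ := by
        intro x hx heq
        simp only [Set.mem_setOf_eq] at heq
        exact absurd heq (ne_of_gt hx.1)
      have hco : μ ({x | φ x = 0}ᶜ) ≤ 1/2 := by
        rw [prob_compl_eq_one_sub hzmeas]
        calc (1:ENNReal) - μ {x | φ x = 0} ≤ 1 - 1/2 := tsub_le_tsub_left h0 1
          _ = 1/2 := by
              rw [one_div, ENNReal.one_sub_inv_two]
      have : ENNReal.ofReal (1/2 : ℝ) = 1/2 := by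
        rw [ENNReal.ofReal_div_of_pos (by norm_num), ENNReal.ofReal_one,
          ENNReal.ofReal_ofNat]
      rw [this]
      exact le_trans (measure_mono hsub) hco
    -- gradient bound for φ itself
    have hgrad : ∀ x, ‖fderiv ℝ φ x‖ ≤ S.indicator (fun y => 2 * ‖fderiv ℝ φ y‖) x := by
      intro x
      by_cases hx : x ∈ S
      · rw [Set.indicator_of_mem hx]
        have := norm_nonneg (fderiv ℝ φ x)
        linarith
      · rw [Set.indicator_of_notMem hx]
        have hz : fderiv ℝ φ x = 0 := by
          simp only [hSdef, Set.mem_setOf_eq, not_and_or, not_lt] at hx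
          rcases hx with hx | hx
          · have h00 : φ x = 0 := le_antisymm hx (hmem x).1
            apply fderiv_eq_zero_of_forall_ge
            intro y; rw [h00]; exact (hmem y).1
          · have h11 : φ x = 1 := le_antisymm (hmem x).2 hx
            apply fderiv_eq_zero_of_forall_le
            intro y; rw [h11]; exact (hmem y).2
        rw [hz]; simp
    have hH1 : ENNReal.ofReal r ≤ ∫⁻ x, ENNReal.ofReal ‖fderiv ℝ φ x‖ ∂μ :=
      H a ha ha2 φ hφ hmem h0 h1
    have hmeasu : Measurable fun x => ‖fderiv ℝ φ x‖ := (measurable_fderiv ℝ φ).norm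
    have key := quant_step μ (fun x => ‖fderiv ℝ φ x‖) (fun x => ‖fderiv ℝ φ x‖)
      (fun x => norm_nonneg _) S hSmeas hmeasu r (1/2) hr0 (by norm_num) hμS hH1 hgrad
    refine le_trans (ENNReal.ofReal_le_ofReal ?_) key
    -- real inequality : c²/131072 * n2 * a * L2 ≤ r²/(4*(1/2))
    have hsq : r^2 = c^2 * n2 * (a^2 * L2) := by
      rw [hrdef, ← e1, ← e2]; ring
    rw [hsq]
    have ha16 : (1:ℝ)/65536 ≤ a := by
      calc (1:ℝ)/65536 = (1/16:ℝ)^(0+4) := by norm_num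
        _ ≤ a := haN
    have hn2pos : (0:ℝ) ≤ n2 := Real.rpow_nonneg (le_of_lt hn0) _
    have hL2pos : (0:ℝ) ≤ L2 := Real.rpow_nonneg (le_of_lt hL0) _
    have expand : c^2 * n2 * (a^2*L2) / (4*(1/2)) = (c^2*n2*L2*a) * (a/2) := by ring
    rw [expand]
    calc c^2/131072 * n2 * a * L2 = (c^2*n2*L2*a) * (1/131072) := by ring
      _ ≤ (c^2*n2*L2*a) * (a/2) := by
          apply mul_le_mul_of_nonneg_left _ (by positivity)
          linarith
      _ = (c^2*n2*L2*a) * (a/2) := rfl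
  | succ N ih =>
    intro a haN ha2 φ hφ hmem h0 h1
    by_cases hcov : (1/16:ℝ)^(N+4) ≤ a
    · exact ih a hcov ha2 φ hφ hmem h0 h1
    push_neg at hcov
    rw [ge_iff_le]
    have ha : 0 < a := lt_of_lt_of_le (by positivity) haN
    have hasmall : a < (1/16:ℝ)^4 :=
      lt_of_lt_of_le hcov (pow_le_pow_of_le_one (by norm_num) (by norm_num) (by omega))
    have ha65536 : a < 1/65536 := by
      have : ((1:ℝ)/16)^4 = 1/65536 := by norm_num
      linarith [hasmall, this.symm.le]
    have hL0 : 0 < Real.log (1/a) := Real.log_pos (by rw [lt_div_iff₀ ha]; linarith)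
    set L := Real.log (1/a) with hLdef
    set n1 := (n:ℝ) ^ ((1:ℝ)/p) with hn1def
    set n2 := (n:ℝ) ^ ((2:ℝ)/p) with hn2def
    set Lq := L ^ (1 - 1/p) with hLqdef
    set L2 := L ^ (2 - 2/p) with hL2def
    have e1 : n1 * n1 = n2 := by
      rw [hn1def, hn2def, ← Real.rpow_add hn0]; congr 1; ring
    have e2 : Lq * Lq = L2 := by
      rw [hLqdef, hL2def, ← Real.rpow_add hL0]; congr 1; ring
    have hn2pos : (0:ℝ) ≤ n2 := Real.rpow_nonneg (le_of_lt hn0) _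
    have hL2pos : (0:ℝ) ≤ L2 := Real.rpow_nonneg (le_of_lt hL0) _
    have hφc : Continuous φ := hφ.continuous
    -- the half-level set
    set A : Set (EuclideanSpace ℝ (Fin n)) := {x | 1/2 ≤ φ x} with hAdef
    have hAmeas : MeasurableSet A := (isClosed_le continuous_const hφc).measurableSet
    set mbar := (μ A).toReal with hmbardef
    have hofmbar : ENNReal.ofReal mbar = μ A := ENNReal.ofReal_toReal (measure_ne_top μ A)
    have hA1 : μ {x | φ x = 1} ≤ μ A := by
      apply measure_mono
      intro x hx
      simp only [Set.mem_setOf_eq] at hx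
      simp only [hAdef, Set.mem_setOf_eq]
      rw [hx]; norm_num
    have hma : a ≤ mbar := by
      rw [← ENNReal.ofReal_le_ofReal_iff ENNReal.toReal_nonneg]
      rw [hofmbar]
      exact le_trans h1 hA1
    by_cases hcase : mbar ≤ 16*a
    · -- top case : CS on the slab {1/2 < φ < 1}
      set T : Set (EuclideanSpace ℝ (Fin n)) := {x | 1/2 < φ x ∧ φ x < 1} with hTdef
      have hTopen : IsOpen T := by
        have : T = {x | 1/2 < φ x} ∩ {x | φ x < 1} := rfl
        rw [this]
        exact (isOpen_lt continuous_const hφc).inter (isOpen_lt hφc continuous_const)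
      have hTmeas : MeasurableSet T := hTopen.measurableSet
      have hμT : μ T ≤ ENNReal.ofReal (16*a) := by
        have hsub : T ⊆ A := fun x hx => le_of_lt hx.1
        calc μ T ≤ μ A := measure_mono hsub
          _ = ENNReal.ofReal mbar := hofmbar.symm
          _ ≤ ENNReal.ofReal (16*a) := ENNReal.ofReal_le_ofReal hcase
      -- the truncation ψ
      set ψ : (EuclideanSpace ℝ (Fin n)) → ℝ := fun y => max (2 * φ y - 1) 0 with hψdef
      have lip2 : LipschitzWith 2 (fun t : ℝ => 2*t - 1) := by
        apply LipschitzWith.of_dist_le_mul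
        intro x y
        rw [Real.dist_eq, Real.dist_eq]
        have he : (2*x - 1) - (2*y - 1) = 2*(x - y) := by ring
        rw [he, abs_mul, abs_two]
        push_cast
        norm_num
      have hψlip : LocallyLipschitz ψ := by
        have hcomp : LocallyLipschitz (fun y => 2 * φ y - 1) :=
          (lip2.locallyLipschitz).comp hφ
        exact hcomp.max_const 0
      have hψmem : ∀ x, ψ x ∈ Set.Icc (0:ℝ) 1 := by
        intro x
        constructor
        · exact le_max_right _ _
        · exact max_le (by linarith [(hmem x).2]) zero_le_one
      have hψ0 : μ {x | ψ x = 0} ≥ 1/2 := by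
        refine le_trans h0 (measure_mono ?_)
        intro x hx
        simp only [Set.mem_setOf_eq] at hx ⊢
        rw [hψdef]; simp only
        rw [hx]; norm_num
      have hψ1 : μ {x | ψ x = 1} ≥ ENNReal.ofReal a := by
        refine le_trans h1 (measure_mono ?_)
        intro x hx
        simp only [Set.mem_setOf_eq] at hx ⊢
        rw [hψdef]; simp only
        rw [hx]; norm_num
      set r := c * n1 * a * Lq with hrdef
      have hr0 : 0 ≤ r := by
        have : 0 ≤ n1 := Real.rpow_nonneg (le_of_lt hn0) _
        have : 0 ≤ Lq := Real.rpow_nonneg (le_of_lt hL0) _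
        positivity
      have hH1 : ENNReal.ofReal r ≤ ∫⁻ x, ENNReal.ofReal ‖fderiv ℝ ψ x‖ ∂μ :=
        H a ha ha2 ψ hψlip hψmem hψ0 hψ1
      have hmeasu : Measurable fun x => ‖fderiv ℝ φ x‖ := (measurable_fderiv ℝ φ).norm
      have hgrad : ∀ x, ‖fderiv ℝ ψ x‖ ≤ T.indicator (fun y => 2 * ‖fderiv ℝ φ y‖) x :=
        fun x => psi_grad_bound hφc hmem x
      have key := quant_step μ (fun x => ‖fderiv ℝ φ x‖) (fun x => ‖fderiv ℝ ψ x‖)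
        (fun x => norm_nonneg _) T hTmeas hmeasu r (16*a) hr0 (by positivity) hμT hH1 hgrad
      refine le_trans (ENNReal.ofReal_le_ofReal ?_) key
      have hsq : r^2 = c^2 * n2 * (a^2 * L2) := by
        rw [hrdef, ← e1, ← e2]; ring
      rw [hsq]
      have expand : c^2 * n2 * (a^2*L2) / (4*(16*a)) = (c^2*n2*L2*a) * (1/64) := by
        field_simp
        ring
      rw [expand]
      calc c^2/131072 * n2 * a * L2 = (c^2*n2*L2*a) * (1/131072) := by ring
        _ ≤ (c^2*n2*L2*a) * (1/64) := by
            apply mul_le_mul_of_nonneg_left _ (by positivity)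
            norm_num
    · -- recursive case : pass to the lower truncation χ
      push_neg at hcase
      set a'' := min mbar (1/4 : ℝ) with ha''def
      have ha''16 : 16*a ≤ a'' := by
        apply le_min (le_of_lt hcase)
        linarith
      have ha''pos : 0 < a'' := by linarith
      have haN'' : (1/16:ℝ)^(N+4) ≤ a'' := by
        have h' : (1/16:ℝ)^(N+4) * (1/16) ≤ a := by
          rw [← pow_succ]; exact haN
        linarith
      have ha''2 : a'' < 1/2 := lt_of_le_of_lt (min_le_right _ _) (by norm_num)
      -- the truncation χ
      set χ : (EuclideanSpace ℝ (Fin n)) → ℝ := fun y => min (2 * φ y) 1 with hχdef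
      have lip2' : LipschitzWith 2 (fun t : ℝ => 2*t) := by
        apply LipschitzWith.of_dist_le_mul
        intro x y
        rw [Real.dist_eq, Real.dist_eq]
        have he : (2*x) - (2*y) = 2*(x - y) := by ring
        rw [he, abs_mul, abs_two]
        push_cast
        norm_num
      have hχlip : LocallyLipschitz χ := by
        have hcomp : LocallyLipschitz (fun y => 2 * φ y) :=
          (lip2'.locallyLipschitz).comp hφ
        exact hcomp.min_const 1
      have hχmem : ∀ x, χ x ∈ Set.Icc (0:ℝ) 1 := by
        intro x
        constructor
        · exact le_min (by linarith [(hmem x).1]) zero_le_one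
        · exact min_le_right _ _
      have hχ0 : μ {x | χ x = 0} ≥ 1/2 := by
        refine le_trans h0 (measure_mono ?_)
        intro x hx
        simp only [Set.mem_setOf_eq] at hx ⊢
        rw [hχdef]; simp only
        rw [hx]; norm_num
      have hχ1 : μ {x | χ x = 1} ≥ ENNReal.ofReal a'' := by
        have hsub : A ⊆ {x | χ x = 1} := by
          intro x hx
          simp only [hAdef, Set.mem_setOf_eq] at hx
          simp only [Set.mem_setOf_eq]
          rw [hχdef]; simp only
          rw [min_eq_right (by linarith)]
        calc ENNReal.ofReal a'' ≤ ENNReal.ofReal mbar :=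
              ENNReal.ofReal_le_ofReal (min_le_left _ _)
          _ = μ A := hofmbar
          _ ≤ μ {x | χ x = 1} := measure_mono hsub
      -- apply the inductive hypothesis to χ
      have ihχ := ih a'' haN'' ha''2 χ hχlip hχmem hχ0 hχ1
      rw [ge_iff_le] at ihχ
      -- ∫ ‖∇χ‖² ≤ 4 ∫ ‖∇φ‖²
      have hptwise : ∀ x, ENNReal.ofReal (‖fderiv ℝ χ x‖^2) ≤
          4 * ENNReal.ofReal (‖fderiv ℝ φ x‖^2) := by
        intro x
        have h := chi_grad_bound hφc hmem x
        have h2 : ‖fderiv ℝ χ x‖^2 ≤ 4*‖fderiv ℝ φ x‖^2 := by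
          nlinarith [norm_nonneg (fderiv ℝ χ x), norm_nonneg (fderiv ℝ φ x)]
        calc ENNReal.ofReal (‖fderiv ℝ χ x‖^2) ≤ ENNReal.ofReal (4*‖fderiv ℝ φ x‖^2) :=
              ENNReal.ofReal_le_ofReal h2
          _ = 4 * ENNReal.ofReal (‖fderiv ℝ φ x‖^2) := by
              rw [ENNReal.ofReal_mul (by norm_num)]
              norm_num
      have hmeassq : Measurable fun x => ENNReal.ofReal (‖fderiv ℝ φ x‖^2) :=
        ((measurable_fderiv ℝ φ).norm.pow_const 2).ennreal_ofReal
      have hint4 : ∫⁻ x, ENNReal.ofReal (‖fderiv ℝ χ x‖^2) ∂μ ≤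
          4 * ∫⁻ x, ENNReal.ofReal (‖fderiv ℝ φ x‖^2) ∂μ := by
        calc ∫⁻ x, ENNReal.ofReal (‖fderiv ℝ χ x‖^2) ∂μ
            ≤ ∫⁻ x, 4 * ENNReal.ofReal (‖fderiv ℝ φ x‖^2) ∂μ := lintegral_mono hptwise
          _ = 4 * ∫⁻ x, ENNReal.ofReal (‖fderiv ℝ φ x‖^2) ∂μ :=
              lintegral_const_mul 4 hmeassq
      -- the real inequality transferring a to a''
      have hreal : 4 * (c^2/131072 * n2 * a * L2) ≤
          c^2/131072 * n2 * a'' * (Real.log (1/a'')) ^ (2 - 2/p) := by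
        have hpsi := psi2_ineq p a a'' hp1 hp2 ha (le_of_lt hasmall) ha''16 (min_le_right _ _)
        calc 4 * (c^2/131072 * n2 * a * L2)
            = (c^2/131072 * n2) * (4 * (a * L2)) := by ring
          _ ≤ (c^2/131072 * n2) * (a'' * (Real.log (1/a'')) ^ (2 - 2/p)) := by
              apply mul_le_mul_of_nonneg_left _ (by positivity)
              rw [hL2def]
              exact hpsi
          _ = c^2/131072 * n2 * a'' * (Real.log (1/a'')) ^ (2 - 2/p) := by ring
      -- assemble in ENNReal
      have h40 : (4:ENNReal) ≠ 0 := by norm_num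
      have h4top : (4:ENNReal) ≠ ⊤ := by norm_num
      rw [← ENNReal.mul_le_mul_iff_right h40 h4top]
      have hXnn : 0 ≤ c^2/131072 * n2 * a * L2 := by positivity
      calc 4 * ENNReal.ofReal (c^2/131072 * n2 * a * L2)
          = ENNReal.ofReal (4 * (c^2/131072 * n2 * a * L2)) := by
            rw [ENNReal.ofReal_mul (by norm_num : (0:ℝ) ≤ 4)]
            norm_num
        _ ≤ ENNReal.ofReal (c^2/131072 * n2 * a'' * (Real.log (1/a'')) ^ (2 - 2/p)) :=
            ENNReal.ofReal_le_ofReal hreal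
        _ ≤ ∫⁻ x, ENNReal.ofReal (‖fderiv ℝ χ x‖^2) ∂μ := ihχ
        _ ≤ 4 * ∫⁻ x, ENNReal.ofReal (‖fderiv ℝ φ x‖^2) ∂μ := hint4

end Main

/-- Proposition B: an `L¹` capacity inequality
`∫‖∇φ‖₂ dμ ≥ c n^{1/p} a log^{1-1/p}(1/a)` for all admissible `φ` implies the `L²`
capacity inequality `∫‖∇φ‖₂² dμ ≥ c₁ n^{2/p} a log^{2-2/p}(1/a)`, with `c₁`
depending only on `c`. -/
theorem L1_capacity_implies_L2_capacity (c : ℝ) (hc : 0 < c) :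
    ∃ c₁ : ℝ, 0 < c₁ ∧
      ∀ (n : ℕ), 1 ≤ n → ∀ (p : ℝ), 1 ≤ p → p ≤ 2 →
      ∀ (μ : Measure (EuclideanSpace ℝ (Fin n))), IsProbabilityMeasure μ →
      (∀ a : ℝ, 0 < a → a < 1 / 2 →
        ∀ φ : EuclideanSpace ℝ (Fin n) → ℝ, LocallyLipschitz φ →
          (∀ x, φ x ∈ Set.Icc (0 : ℝ) 1) →
          μ {x | φ x = 0} ≥ 1 / 2 → μ {x | φ x = 1} ≥ ENNReal.ofReal a →
          ∫⁻ x, ENNReal.ofReal ‖fderiv ℝ φ x‖ ∂μ ≥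
            ENNReal.ofReal (c * (n : ℝ) ^ ((1 : ℝ) / p) * a *
              (Real.log (1 / a)) ^ (1 - 1 / p))) →
      ∀ a : ℝ, 0 < a → a < 1 / 2 →
        ∀ φ : EuclideanSpace ℝ (Fin n) → ℝ, LocallyLipschitz φ →
          (∀ x, φ x ∈ Set.Icc (0 : ℝ) 1) →
          μ {x | φ x = 0} ≥ 1 / 2 → μ {x | φ x = 1} ≥ ENNReal.ofReal a →
          ∫⁻ x, ENNReal.ofReal (‖fderiv ℝ φ x‖ ^ 2) ∂μ ≥
            ENNReal.ofReal (c₁ * (n : ℝ) ^ ((2 : ℝ) / p) * a *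
              (Real.log (1 / a)) ^ (2 - 2 / p)) := by
  refine ⟨c^2/131072, by positivity, ?_⟩
  intro n hn p hp1 hp2 μ hprob H a ha ha2 φ hφ hmem h0 h1
  obtain ⟨N, hN⟩ := exists_pow_lt_of_lt_one ha (by norm_num : (1/16:ℝ) < 1)
  have hNa : (1/16:ℝ)^(N+4) ≤ a :=
    le_trans (pow_le_pow_of_le_one (by norm_num) (by norm_num) (by omega)) (le_of_lt hN)
  exact main_ind c hc n hn p hp1 hp2 μ hprob H N a hNa ha2 φ hφ hmem h0 h1
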